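/- Let J : ℂⁿ → End_ℝ(ℂⁿ) be a smooth map with J(x) ∘ J(x) = −id for every x ∈ ℂⁿ and J(x)(W) ⊆ W for every x ∈ W. Let U ⊆ ℝ² be an open neighborhood of 0 and let f : U → ℂⁿ be a smooth map satisfying ∂f/∂s(z) + J(f(z))(∂f/∂t(z)) = 0 for all z ∈ U. Let ℓ ≥ 1 and suppose that f(0) ∈ W, that ∂^{i+j}f/∂s^i∂t^j(0) ∈ W for all i, j ≥ 0 with 1 ≤ i+j ≤ ℓ−1, and that ∂^ℓf/∂s^ℓ(0) ∈ W. Then ∂^{i+j}f/∂s^i∂t^j(0) ∈ W for all i, j ≥ 0 with 1 ≤ i+j ≤ ℓ. -/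

import Mathlib

/-- Partial derivative in the `s`-direction of a map `ℝ² → E`. -/
noncomputable def pS {E : Type*} [NormedAddCommGroup E] [NormedSpace ℝ E]
    (f : ℝ × ℝ → E) : ℝ × ℝ → E :=
  fun z => fderiv ℝ f z (1, 0)

/-- Partial derivative in the `t`-direction of a map `ℝ² → E`. -/
noncomputable def pT {E : Type*} [NormedAddCommGroup E] [NormedSpace ℝ E]
    (f : ℝ × ℝ → E) : ℝ × ℝ → E :=
  fun z => fderiv ℝ f z (0, 1)

/-- The iterated partial derivative `∂^{i+j} f / ∂s^i ∂t^j`. -/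
noncomputable def pD {E : Type*} [NormedAddCommGroup E] [NormedSpace ℝ E]
    (f : ℝ × ℝ → E) (i j : ℕ) : ℝ × ℝ → E :=
  pS^[i] (pT^[j] f)

/-- The real subspace `W = ℂᵏ × {0} ⊆ ℂⁿ`. -/
def Wk (n k : ℕ) : Set (Fin n → ℂ) := {x | ∀ i : Fin n, k ≤ (i : ℕ) → x i = 0}

open Filter Topology List


section Words

variable {E F G : Type*} [NormedAddCommGroup E] [NormedSpace ℝ E]
  [NormedAddCommGroup F] [NormedSpace ℝ F] [NormedAddCommGroup G] [NormedSpace ℝ G]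

/-- single partial derivative in direction `a` -/
noncomputable def dd (a : ℝ × ℝ) (h : ℝ × ℝ → E) : ℝ × ℝ → E := fun z => fderiv ℝ h z a

def ev : Bool → ℝ × ℝ := fun a => if a then ((1:ℝ), (0:ℝ)) else ((0:ℝ), (1:ℝ))

/-- word of partial derivatives, innermost first -/
noncomputable def Dw : List Bool → (ℝ × ℝ → E) → (ℝ × ℝ → E)
  | [], h => h
  | a :: w, h => Dw w (dd (ev a) h)

@[simp] lemma Dw_nil (h : ℝ × ℝ → E) : Dw [] h = h := rfl
@[simp] lemma Dw_cons (a : Bool) (w : List Bool) (h : ℝ × ℝ → E) :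
    Dw (a :: w) h = Dw w (dd (ev a) h) := rfl

variable {U : Set (ℝ × ℝ)}

lemma hinfle : ((⊤:ℕ∞) : WithTop ℕ∞) + 1 ≤ ((⊤:ℕ∞) : WithTop ℕ∞) := by
  simp

lemma dd_contDiffOn (hU : IsOpen U) {h : ℝ × ℝ → E} (hh : ContDiffOn ℝ (⊤:ℕ∞) h U)
    (a : ℝ × ℝ) : ContDiffOn ℝ (⊤:ℕ∞) (dd a h) U :=
  (hh.fderiv_of_isOpen hU hinfle).clm_apply contDiffOn_const

lemma Dw_contDiffOn (hU : IsOpen U) {h : ℝ × ℝ → E} (hh : ContDiffOn ℝ (⊤:ℕ∞) h U) :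
    ∀ w : List Bool, ContDiffOn ℝ (⊤:ℕ∞) (Dw w h) U := by
  intro w
  induction w generalizing h with
  | nil => exact hh
  | cons a w ih => exact ih (dd_contDiffOn hU hh _)

lemma dd_congr (hU : IsOpen U) {g h : ℝ × ℝ → E} (hgh : ∀ z ∈ U, g z = h z) (a : ℝ × ℝ) :
    ∀ z ∈ U, dd a g z = dd a h z := by
  intro z hz
  have : g =ᶠ[𝓝 z] h := eventually_of_mem (hU.mem_nhds hz) hgh
  simp only [dd, this.fderiv_eq]

lemma Dw_congr (hU : IsOpen U) {g h : ℝ × ℝ → E} (hgh : ∀ z ∈ U, g z = h z) :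
    ∀ (w : List Bool), ∀ z ∈ U, Dw w g z = Dw w h z := by
  intro w
  induction w generalizing g h with
  | nil => exact hgh
  | cons a w ih => exact ih (dd_congr hU hgh _)

lemma diffAt (hU : IsOpen U) {h : ℝ × ℝ → E} (hh : ContDiffOn ℝ (⊤:ℕ∞) h U)
    {z : ℝ × ℝ} (hz : z ∈ U) : DifferentiableAt ℝ h z :=
  ((hh z hz).contDiffAt (hU.mem_nhds hz)).differentiableAt (by simp)

lemma Dw_add (hU : IsOpen U) {g h : ℝ × ℝ → E} (hg : ContDiffOn ℝ (⊤:ℕ∞) g U)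
    (hh : ContDiffOn ℝ (⊤:ℕ∞) h U) :
    ∀ (w : List Bool), ∀ z ∈ U, Dw w (fun z => g z + h z) z = Dw w g z + Dw w h z := by
  intro w
  induction w generalizing g h with
  | nil => intro z hz; rfl
  | cons a w ih =>
    intro z hz
    have step : ∀ y ∈ U, dd (ev a) (fun z => g z + h z) y = dd (ev a) g y + dd (ev a) h y := by
      intro y hy
      simp only [dd]
      rw [fderiv_fun_add (diffAt hU hg hy) (diffAt hU hh hy)]
      rfl
    have := Dw_congr hU step w z hz
    simp only [Dw_cons]
    rw [this]
    exact ih (dd_contDiffOn hU hg _) (dd_contDiffOn hU hh _) z hz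

end Words

section Part1x
variable {E G : Type*} [NormedAddCommGroup E] [NormedSpace ℝ E]
  [NormedAddCommGroup G] [NormedSpace ℝ G]

/-- operators mapping W into V -/
def opSub (W : Submodule ℝ E) (V : Submodule ℝ G) : Submodule ℝ (E →L[ℝ] G) where
  carrier := {T | ∀ w ∈ W, T w ∈ V}
  add_mem' := by intro a b ha hb w hw; simpa using V.add_mem (ha w hw) (hb w hw)
  zero_mem' := by intro w hw; simpa using V.zero_mem
  smul_mem' := by intro c T hT w hw; simpa using V.smul_mem c (hT w hw)

lemma opSub_closed (W : Submodule ℝ E) {V : Submodule ℝ G} (hV : IsClosed (V : Set G)) :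
    IsClosed (opSub W V : Set (E →L[ℝ] G)) := by
  have : (opSub W V : Set (E →L[ℝ] G)) = ⋂ w ∈ W, (fun T : E →L[ℝ] G => T w) ⁻¹' V := by
    ext T; simp only [Set.mem_iInter, Set.mem_preimage, SetLike.mem_coe]; rfl
  rw [this]
  exact isClosed_biInter fun w _ =>
    hV.preimage (ContinuousLinearMap.apply ℝ G w).continuous

/-- derivative of a smooth map preserving a closed submodule along a curve argument -/
lemma fderiv_mem {V : Submodule ℝ G} (hV : IsClosed (V : Set G)) {g : E → G} {x w : E}
    (hg : DifferentiableAt ℝ g x) (hc : ∀ t : ℝ, g (x + t • w) ∈ V) :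
    fderiv ℝ g x w ∈ V := by
  have hline : HasDerivAt (fun t : ℝ => x + t • w) w 0 := by
    simpa using ((hasDerivAt_id (0:ℝ)).smul_const w).const_add x
  have hd : HasDerivAt (fun t : ℝ => g (x + t • w)) (fderiv ℝ g x w) 0 := by
    have hg' : HasFDerivAt g (fderiv ℝ g x) ((fun t : ℝ => x + t • w) 0) := by
      simpa using hg.hasFDerivAt
    exact (hg'.comp_hasDerivAt (0:ℝ) hline)
  have ht := hasDerivAt_iff_tendsto_slope.mp hd
  refine hV.mem_of_tendsto ht ?_
  filter_upwards with t
  have : slope (fun t : ℝ => g (x + t • w)) 0 t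
      = (t - 0)⁻¹ • (g (x + t • w) - g (x + (0:ℝ) • w)) := by
    simp [slope_def_field, slope, vsub_eq_sub]
  rw [this]
  exact V.smul_mem _ (V.sub_mem (hc t) (hc 0))
end Part1x
section Core
universe u
variable {E : Type u} [NormedAddCommGroup E] [NormedSpace ℝ E]
  {U : Set (ℝ × ℝ)} {z₀ : ℝ × ℝ}

/-- iterated Leibniz membership for `z ↦ A z (v z)` -/
lemma lemP (hU : IsOpen U) (hz₀ : z₀ ∈ U) (W : Submodule ℝ E) :
    ∀ (w : List Bool) {G : Type u} [NormedAddCommGroup G] [NormedSpace ℝ G]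
      (V : Submodule ℝ G) (A : ℝ × ℝ → (E →L[ℝ] G)) (v : ℝ × ℝ → E),
      ContDiffOn ℝ (⊤:ℕ∞) A U → ContDiffOn ℝ (⊤:ℕ∞) v U →
      (∀ u : List Bool, u.Sublist w → Dw u A z₀ ∈ opSub W V) →
      (∀ u : List Bool, u.Sublist w → Dw u v z₀ ∈ W) →
      Dw w (fun z => A z (v z)) z₀ ∈ V := by
  intro w
  induction w with
  | nil =>
    intro G _ _ V A v _ _ hA hv
    exact hA [] (Sublist.refl _) (v z₀) (hv [] (Sublist.refl _))
  | cons a w ih =>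
    intro G _ _ V A v hAs hvs hA hv
    have hAs' := dd_contDiffOn hU hAs (ev a)
    have hvs' := dd_contDiffOn hU hvs (ev a)
    have step : ∀ z ∈ U, dd (ev a) (fun z => A z (v z)) z
        = (fun z => (dd (ev a) A z) (v z)) z + (fun z => A z (dd (ev a) v z)) z := by
      intro z hz
      simp only [dd]
      rw [fderiv_clm_apply (diffAt hU hAs hz) (diffAt hU hvs hz)]
      simp [add_comm]
    have t1s : ContDiffOn ℝ (⊤:ℕ∞) (fun z => (dd (ev a) A z) (v z)) U := hAs'.clm_apply hvs
    have t2s : ContDiffOn ℝ (⊤:ℕ∞) (fun z => A z (dd (ev a) v z)) U := hAs.clm_apply hvs'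
    simp only [Dw_cons]
    rw [Dw_congr hU step w z₀ hz₀, Dw_add hU t1s t2s w z₀ hz₀]
    refine V.add_mem ?_ ?_
    · exact ih V (dd (ev a) A) v hAs' hvs
        (fun u hu => hA (a :: u) (hu.cons₂ a))
        (fun u hu => hv u (hu.trans (sublist_cons_self a w)))
    · exact ih V A (dd (ev a) v) hAs hvs'
        (fun u hu => hA u (hu.trans (sublist_cons_self a w)))
        (fun u hu => hv (a :: u) (hu.cons₂ a))

/-- iterated chain-rule membership for `g ∘ f` -/
lemma lemC (hU : IsOpen U) (hz₀ : z₀ ∈ U) (W : Submodule ℝ E)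
    (f : ℝ × ℝ → E) (hf : ContDiffOn ℝ (⊤:ℕ∞) f U) (hf0 : f z₀ ∈ W) :
    ∀ (N : ℕ) {G : Type u} [NormedAddCommGroup G] [NormedSpace ℝ G]
      (V : Submodule ℝ G), IsClosed (V : Set G) →
      ∀ (g : E → G), ContDiff ℝ (⊤:ℕ∞) g → (∀ x ∈ W, g x ∈ V) →
      ∀ (w : List Bool), w.length ≤ N →
      (∀ u : List Bool, u.Sublist w → u ≠ [] → Dw u f z₀ ∈ W) →
      Dw w (fun z => g (f z)) z₀ ∈ V := by
  intro N
  induction N with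
  | zero =>
    intro G _ _ V _ g _ hgW w hw _
    rw [List.length_eq_zero_iff.mp (Nat.le_zero.mp hw)]
    exact hgW _ hf0
  | succ N ihN =>
    intro G _ _ V hV g hg hgW w hw hfw
    match w with
    | [] => exact hgW _ hf0
    | a :: w =>
      have hwlen : w.length ≤ N := by simpa using hw
      have hdg : ContDiff ℝ (⊤:ℕ∞) (fderiv ℝ g) := hg.fderiv_right hinfle
      have hAs : ContDiffOn ℝ (⊤:ℕ∞) (fun z => fderiv ℝ g (f z)) U := hdg.comp_contDiffOn hf
      have hvs : ContDiffOn ℝ (⊤:ℕ∞) (dd (ev a) f) U := dd_contDiffOn hU hf (ev a)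
      have step : ∀ z ∈ U, dd (ev a) (fun z => g (f z)) z
          = (fun z => (fderiv ℝ g (f z)) (dd (ev a) f z)) z := by
        intro z hz
        simp only [dd]
        rw [show (fun z => g (f z)) = g ∘ f from rfl,
          fderiv_comp z (hg.differentiable (by simp) (f z))
          (diffAt hU hf hz)]
        rfl
      simp only [Dw_cons]
      rw [Dw_congr hU step w z₀ hz₀]
      refine lemP hU hz₀ W w V _ _ hAs hvs ?_ ?_
      · intro u hu
        refine ihN (opSub W V) (opSub_closed W hV) (fderiv ℝ g) hdg ?_ u
          (le_trans hu.length_le hwlen) ?_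
        · intro x hx w' hw'
          refine fderiv_mem hV (hg.differentiable (by simp) x)
            (fun t => hgW _ (W.add_mem hx (W.smul_mem t hw')))
        · intro u' hu' hne
          exact hfw u' ((hu'.trans hu).trans (sublist_cons_self a w)) hne
      · intro u hu
        exact hfw (a :: u) (hu.cons₂ a) (by simp)
end Core
section SortSec
variable {E : Type*} [NormedAddCommGroup E] [NormedSpace ℝ E] {U : Set (ℝ × ℝ)}

lemma dd_swap (hU : IsOpen U) {h : ℝ × ℝ → E} (hh : ContDiffOn ℝ (⊤:ℕ∞) h U)
    (a b : ℝ × ℝ) : ∀ z ∈ U, dd a (dd b h) z = dd b (dd a h) z := by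
  intro z hz
  have hca : ContDiffAt ℝ (⊤:ℕ∞) h z := (hh z hz).contDiffAt (hU.mem_nhds hz)
  have hsymm : IsSymmSndFDerivAt ℝ h z := hca.isSymmSndFDerivAt (by rw [minSmoothness_of_isRCLikeNormedField]; exact WithTop.coe_le_coe.mpr le_top)
  have hdiff : DifferentiableAt ℝ (fderiv ℝ h) z :=
    diffAt hU (hh.fderiv_of_isOpen hU hinfle) hz
  have key : ∀ c d : ℝ × ℝ, dd c (dd d h) z = fderiv ℝ (fderiv ℝ h) z c d := by
    intro c d
    have e : dd c (dd d h) z = fderiv ℝ (fun y => (fderiv ℝ h y) d) z c := rfl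
    rw [e, fderiv_clm_apply hdiff (differentiableAt_const d)]
    simp
  rw [key a b, key b a, hsymm.eq]

lemma Dw_swap (hU : IsOpen U) {h : ℝ × ℝ → E} (hh : ContDiffOn ℝ (⊤:ℕ∞) h U)
    (a b : Bool) (w : List Bool) :
    ∀ z ∈ U, Dw (a :: b :: w) h z = Dw (b :: a :: w) h z := by
  intro z hz
  simp only [Dw_cons]
  exact Dw_congr hU (dd_swap hU hh (ev b) (ev a)) w z hz

lemma Dw_move (hU : IsOpen U) :
    ∀ (j : ℕ) (u : List Bool) {h : ℝ × ℝ → E}, ContDiffOn ℝ (⊤:ℕ∞) h U →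
    ∀ z ∈ U, Dw (true :: (List.replicate j false ++ u)) h z
      = Dw (List.replicate j false ++ true :: u) h z := by
  intro j
  induction j with
  | zero => intro u h _ z hz; rfl
  | succ j ih =>
    intro u h hh z hz
    have e1 : Dw (true :: (List.replicate (j+1) false ++ u)) h z
        = Dw (false :: true :: (List.replicate j false ++ u)) h z := by
      rw [List.replicate_succ, List.cons_append]
      exact Dw_swap hU hh true false _ z hz
    rw [e1]
    have e2 : Dw (false :: true :: (List.replicate j false ++ u)) h z
        = Dw (true :: (List.replicate j false ++ u)) (dd (ev false) h) z := rfl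
    rw [e2, ih u (dd_contDiffOn hU hh _) z hz]
    rw [List.replicate_succ, List.cons_append]
    rfl

lemma Dw_sort (hU : IsOpen U) :
    ∀ (w : List Bool) {h : ℝ × ℝ → E}, ContDiffOn ℝ (⊤:ℕ∞) h U →
    ∀ z ∈ U, Dw w h z
      = Dw (List.replicate (w.count false) false ++ List.replicate (w.count true) true) h z := by
  intro w
  induction w with
  | nil => intro h _ z hz; rfl
  | cons a w ih =>
    intro h hh z hz
    have e1 : Dw (a :: w) h z = Dw w (dd (ev a) h) z := rfl
    rw [e1, ih (dd_contDiffOn hU hh _) z hz]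
    cases a with
    | false =>
      have : Dw (List.replicate (w.count false) false ++ List.replicate (w.count true) true)
          (dd (ev false) h) z
          = Dw (false :: (List.replicate (w.count false) false
              ++ List.replicate (w.count true) true)) h z := rfl
      rw [this]
      simp [List.count_cons, List.replicate_succ]
    | true =>
      have e2 : Dw (List.replicate (w.count false) false ++ List.replicate (w.count true) true)
          (dd (ev true) h) z
          = Dw (true :: (List.replicate (w.count false) false
              ++ List.replicate (w.count true) true)) h z := rfl
      rw [e2, Dw_move hU (w.count false) _ hh z hz]
      simp [List.count_cons, List.replicate_succ]

lemma Dw_append (w₁ w₂ : List Bool) (h : ℝ × ℝ → E) :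
    Dw (w₁ ++ w₂) h = Dw w₂ (Dw w₁ h) := by
  induction w₁ generalizing h with
  | nil => rfl
  | cons a w₁ ih => simp only [List.cons_append, Dw_cons]; exact ih _

lemma Dw_replicate_false (j : ℕ) (h : ℝ × ℝ → E) :
    Dw (List.replicate j false) h = pT^[j] h := by
  induction j generalizing h with
  | zero => rfl
  | succ j ih =>
    rw [List.replicate_succ, Dw_cons, ih, Function.iterate_succ_apply]
    rfl

lemma Dw_replicate_true (i : ℕ) (h : ℝ × ℝ → E) :
    Dw (List.replicate i true) h = pS^[i] h := by
  induction i generalizing h with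
  | zero => rfl
  | succ i ih =>
    rw [List.replicate_succ, Dw_cons, ih, Function.iterate_succ_apply]
    rfl

lemma pD_eq_Dw (h : ℝ × ℝ → E) (i j : ℕ) :
    pD h i j = Dw (List.replicate j false ++ List.replicate i true) h := by
  rw [Dw_append, Dw_replicate_false, Dw_replicate_true, pD]

lemma count_len (w : List Bool) : w.count true + w.count false = w.length := by
  induction w with
  | nil => rfl
  | cons a w ih => cases a <;> simp [List.count_cons] <;> omega
end SortSec
noncomputable def WkSub (n k : ℕ) : Submodule ℝ (Fin n → ℂ) where
  carrier := Wk n k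
  add_mem' {a b} ha hb i hi := by
    simp only [Pi.add_apply, ha i hi, hb i hi, add_zero]
  zero_mem' i hi := rfl
  smul_mem' c x hx i hi := by
    simp only [Pi.smul_apply, hx i hi, smul_zero]

lemma mem_WkSub {n k : ℕ} {x : Fin n → ℂ} : x ∈ WkSub n k ↔ x ∈ Wk n k := Iff.rfl

lemma Wk_closed (n k : ℕ) : IsClosed ((WkSub n k : Submodule ℝ (Fin n → ℂ)) : Set (Fin n → ℂ)) := by
  have : ((WkSub n k : Submodule ℝ (Fin n → ℂ)) : Set (Fin n → ℂ))
      = ⋂ (i : Fin n), ⋂ (_ : k ≤ (i : ℕ)), (fun x : Fin n → ℂ => x i) ⁻¹' {0} := by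
    ext x
    simp only [Set.mem_iInter, Set.mem_preimage, Set.mem_singleton_iff]
    rfl
  rw [this]
  exact isClosed_iInter fun i => isClosed_iInter fun _ =>
    isClosed_singleton.preimage (continuous_apply i)

theorem stmt3 (n k : ℕ) (hn : 1 ≤ n) (hk : k ≤ n - 1)
    (J : (Fin n → ℂ) → ((Fin n → ℂ) →L[ℝ] (Fin n → ℂ)))
    (hJsmooth : ContDiff ℝ (⊤ : ℕ∞) J)
    (hJsq : ∀ x v, J x (J x v) = -v)
    (hJW : ∀ x ∈ Wk n k, ∀ w ∈ Wk n k, J x w ∈ Wk n k)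
    (U : Set (ℝ × ℝ)) (hU : IsOpen U) (h0 : (0, 0) ∈ U)
    (f : ℝ × ℝ → (Fin n → ℂ)) (hf : ContDiffOn ℝ (⊤ : ℕ∞) f U)
    (hol : ∀ z ∈ U, pS f z + J (f z) (pT f z) = 0)
    (ℓ : ℕ) (hℓ : 1 ≤ ℓ)
    (hf0 : f (0, 0) ∈ Wk n k)
    (hjets : ∀ i j : ℕ, 1 ≤ i + j → i + j ≤ ℓ - 1 → pD f i j (0, 0) ∈ Wk n k)
    (htop : pD f ℓ 0 (0, 0) ∈ Wk n k) :
    ∀ i j : ℕ, 1 ≤ i + j → i + j ≤ ℓ → pD f i j (0, 0) ∈ Wk n k := by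
  set W := WkSub n k with hW
  have hptJ : ∀ z ∈ U, pT f z = J (f z) (pS f z) := by
    intro z hz
    have h := hol z hz
    have h2 := congrArg (fun y => (J (f z)) y) h
    simp only [map_add, hJsq (f z) (pT f z), map_zero] at h2
    exact (add_neg_eq_zero.mp h2).symm
  have main : ∀ p : ℕ, ∀ j i : ℕ, j ≤ p → i + j = ℓ → pD f i j (0, 0) ∈ Wk n k := by
    intro p
    induction p with
    | zero =>
      intro j i hj hij
      have hj0 : j = 0 := Nat.le_zero.mp hj
      subst hj0
      have : i = ℓ := by omega
      subst this
      exact htop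
    | succ p ih =>
      intro j i hj hij
      rcases Nat.lt_or_ge j (p + 1) with hlt | hge
      · exact ih j i (by omega) hij
      · have hjp : j = p + 1 := by omega
        subst hjp
        set w : List Bool := List.replicate p false ++ List.replicate i true with hwdef
        have hwlen : w.length = ℓ - 1 := by simp [hwdef]; omega
        have hcfw : w.count false = p := by
          simp [hwdef, List.count_append, List.count_replicate]
        have e1 : pD f i (p + 1) (0, 0) = Dw w (pT f) (0, 0) := by
          rw [pD_eq_Dw]
          have : List.replicate (p + 1) false ++ List.replicate i true = false :: w := by
            simp [hwdef, List.replicate_succ]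
          rw [this]
          rfl
        have e2 : Dw w (pT f) (0, 0) = Dw w (fun z => (J (f z)) (pS f z)) (0, 0) :=
          Dw_congr hU hptJ w _ h0
        rw [e1, e2]
        have hAs : ContDiffOn ℝ (⊤:ℕ∞) (fun z => J (f z)) U := hJsmooth.comp_contDiffOn hf
        have hvs : ContDiffOn ℝ (⊤:ℕ∞) (pS f) U := dd_contDiffOn hU hf ((1:ℝ), (0:ℝ))
        refine lemP hU h0 W w W (fun z => J (f z)) (pS f) hAs hvs ?_ ?_
        · intro u hu
          refine lemC hU h0 W f hf hf0 (ℓ - 1) (opSub W W) (opSub_closed W (Wk_closed n k))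
            J hJsmooth (fun x hx w' hw' => hJW x hx w' hw') u ?_ ?_
          · calc u.length ≤ w.length := hu.length_le
              _ = ℓ - 1 := hwlen
          · intro u' hu' hne
            rw [show Dw u' f (0,0) ∈ W ↔ Dw u' f (0,0) ∈ Wk n k from Iff.rfl,
              Dw_sort hU u' hf (0, 0) h0, ← pD_eq_Dw]
            refine hjets _ _ ?_ ?_
            · have h3 := count_len u'
              have h4 : 0 < u'.length := List.length_pos_iff.mpr hne
              omega
            · have h3 := count_len u'
              have h4 : u'.length ≤ w.length := (hu'.trans hu).length_le
              omega
        · intro u hu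
          have e : Dw u (pS f) (0, 0) = Dw (true :: u) f (0, 0) := rfl
          rw [show Dw u (pS f) (0,0) ∈ W ↔ Dw u (pS f) (0,0) ∈ Wk n k from Iff.rfl,
            e, Dw_sort hU (true :: u) hf (0, 0) h0, ← pD_eq_Dw]
          have h3 := count_len (true :: u)
          have hct : (true :: u).count true = u.count true + 1 := by
            simp [List.count_cons]
          have hcf : (true :: u).count false = u.count false := by
            simp [List.count_cons]
          have hlenu : u.length ≤ ℓ - 1 := hwlen ▸ hu.length_le
          by_cases hord : (true :: u).count true + (true :: u).count false ≤ ℓ - 1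
          · exact hjets _ _ (by omega) hord
          · have hcfu : u.count false ≤ p := hcfw ▸ hu.count_le false
            refine ih ((true :: u).count false) ((true :: u).count true) (by omega) ?_
            simp only [List.length_cons] at h3
            omega
  intro i j hij1 hij2
  by_cases hle : i + j ≤ ℓ - 1
  · exact hjets i j hij1 hle
  · exact main j j i le_rfl (by omega)
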